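/- arXiv:math/0607609 — 4 statements merged into one kernel-verified Lean document; each statement's English description precedes it below -/
import Mathlib

section
/- Let E be a topological space, let u_1, …, u_m : E → ℝ be continuous functions, and let u = max(u_1, …, u_m) pointwise. Then for every nonempty J ⊆ {1, …, m}, the frontier of the stratum E_J in E, i.e. (closure of E_J taken in E) \ E_J, is contained in the union of the strata E_{J'} over all J' with J ⊊ J' ⊆ {1, …, m}. -/
/-- The stratum `E_J` associated to functions `u_1, …, u_m` with pointwise maximum `umax`:
the set of points where `umax = u_j` for all `j ∈ J` and `umax > u_i` for all `i ∉ J`. -/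
def stratum {E : Type*} {m : ℕ} (u : Fin m → E → ℝ) (umax : E → ℝ)
    (J : Finset (Fin m)) : Set E :=
  {w | (∀ j ∈ J, umax w = u j w) ∧ ∀ i ∉ J, u i w < umax w}

/-- For continuous `u_1, …, u_m` with pointwise maximum `umax`, the frontier of the stratum
`E_J` is contained in the union of the strata `E_{J'}` over all `J'` strictly containing `J`. -/
theorem stmt1 {E : Type*} [TopologicalSpace E] {m : ℕ} (u : Fin m → E → ℝ)
    (hu : ∀ j, Continuous (u j)) (umax : E → ℝ)
    (hmax : ∀ z, IsGreatest (Set.range fun j => u j z) (umax z))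
    (J : Finset (Fin m)) (hJ : J.Nonempty) :
    closure (stratum u umax J) \ stratum u umax J ⊆
      ⋃ (J' : Finset (Fin m)) (_ : J ⊂ J'), stratum u umax J' := by
  obtain ⟨j0, hj0⟩ := hJ
  have hne : (Finset.univ : Finset (Fin m)).Nonempty := ⟨j0, Finset.mem_univ _⟩
  have humax : umax = fun z => Finset.univ.sup' hne fun j => u j z := by
    funext z
    apply le_antisymm
    · obtain ⟨j, hj⟩ := (hmax z).1
      rw [← hj]
      exact Finset.le_sup' (fun j => u j z) (Finset.mem_univ j)
    · exact Finset.sup'_le _ _ fun j _ => (hmax z).2 ⟨j, rfl⟩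
  have hcont : Continuous umax := by
    rw [humax]
    exact Continuous.finset_sup'_apply hne fun j _ => hu j
  rintro z ⟨hzc, hzn⟩
  -- for each j ∈ J, umax z = u j z
  have hJeq : ∀ j ∈ J, umax z = u j z := by
    intro j hj
    have hclosed : IsClosed {w | umax w = u j w} :=
      isClosed_eq hcont (hu j)
    have hsub : stratum u umax J ⊆ {w | umax w = u j w} := fun w hw => hw.1 j hj
    exact hclosed.closure_subset_iff.mpr hsub hzc
  set J' : Finset (Fin m) := Finset.univ.filter (fun i => u i z = umax z) with hJ'def
  have hJsub : J ⊆ J' := by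
    intro j hj
    simp only [hJ'def, Finset.mem_filter, Finset.mem_univ, true_and]
    exact (hJeq j hj).symm
  have hstrat : z ∈ stratum u umax J' := by
    constructor
    · intro j hj
      simp only [hJ'def, Finset.mem_filter, Finset.mem_univ, true_and] at hj
      exact hj.symm
    · intro i hi
      simp only [hJ'def, Finset.mem_filter, Finset.mem_univ, true_and] at hi
      exact lt_of_le_of_ne ((hmax z).2 ⟨i, rfl⟩) hi
  have hssub : J ⊂ J' := by
    refine ⟨hJsub, fun hsub' => ?_⟩
    exact hzn ⟨hJeq, fun i hi => hstrat.2 i fun hiJ' => hi (hsub' hiJ')⟩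
  exact Set.mem_iUnion₂.mpr ⟨J', hssub, hstrat⟩
end

section
/- Let M be a module over ℂ, let ι : M → ExteriorAlgebra ℂ M be the canonical embedding, let m ≥ 1, and let a_1, …, a_m, b_1, …, b_m ∈ M. Set c_t = ι(a_t + b_t) and e_t = i • ι(b_t − a_t) for 1 ≤ t ≤ m. Then in ExteriorAlgebra ℂ M one has (−1)^{m(m+1)/2} · 2^{−m} · (e_1 * ⋯ * e_m) * (c_1 * ⋯ * c_m) = ∏_{t=1}^{m} (i • (ι(a_t) * ι(b_t))), where the product on the right is taken in increasing order of t. (This is the algebraic identity behind Lemma 1: with a_t = ∂ρ_t and b_t = ∂̄ρ_t it expresses d^cρ_1∧⋯∧d^cρ_m∧dρ_1∧⋯∧dρ_m as a signed multiple of (i∂ρ_1∧∂̄ρ_1)∧⋯∧(i∂ρ_m∧∂̄ρ_m).) -/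
open ExteriorAlgebra

private lemma ι_anticomm {M : Type*} [AddCommGroup M] [Module ℂ M] (u v : M) :
    ι ℂ u * ι ℂ v = -(ι ℂ v * ι ℂ u) :=
  eq_neg_of_add_eq_zero_left (ι_add_mul_swap u v)

private lemma aux_anticomm {M : Type*} [AddCommGroup M] [Module ℂ M]
    (z : ExteriorAlgebra ℂ M) (l : List (ExteriorAlgebra ℂ M))
    (h : ∀ x ∈ l, z * x = -(x * z)) :
    z * l.prod = (-1 : ℂ) ^ l.length • (l.prod * z) := by
  induction l with
  | nil => simp
  | cons a t ih =>
    simp only [List.prod_cons, List.length_cons]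
    rw [← mul_assoc, h a (by simp), neg_mul, mul_assoc,
      ih (fun x hx => h x (by simp [hx])), pow_succ, mul_smul, mul_assoc]
    simp

private lemma key {M : Type*} [AddCommGroup M] [Module ℂ M] (m : ℕ)
    (a b : Fin m → M) :
    ((-1 : ℂ) ^ (m * (m + 1) / 2) * (2 : ℂ)⁻¹ ^ m) •
        ((List.ofFn fun t : Fin m => Complex.I • ι ℂ (b t - a t)).prod *
          (List.ofFn fun t : Fin m => ι ℂ (a t + b t)).prod) =
      (List.ofFn fun t : Fin m => Complex.I • (ι ℂ (a t) * ι ℂ (b t))).prod := by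
  induction m with
  | zero => simp
  | succ m ih =>
    simp only [List.ofFn_succ', List.concat_eq_append, List.prod_append, List.prod_cons,
      List.prod_nil, mul_one]
    set aL := a (Fin.last m)
    set bL := b (Fin.last m)
    set E := (List.ofFn fun t : Fin m => Complex.I • ι ℂ (b t.castSucc - a t.castSucc)).prod
    set C := (List.ofFn fun t : Fin m => ι ℂ (a t.castSucc + b t.castSucc)).prod
    set e : ExteriorAlgebra ℂ M := Complex.I • ι ℂ (bL - aL)
    set c : ExteriorAlgebra ℂ M := ι ℂ (aL + bL)
    have hec : e * c = (-2 * Complex.I) • (ι ℂ aL * ι ℂ bL) := by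
      show (Complex.I • ι ℂ (bL - aL)) * ι ℂ (aL + bL) = _
      rw [smul_mul_assoc, map_sub, map_add, sub_mul, mul_add, mul_add,
        ι_sq_zero, ι_sq_zero, ι_anticomm bL aL]
      module
    have heC : e * C = (-1 : ℂ) ^ m • (C * e) := by
      have := aux_anticomm e (List.ofFn fun t : Fin m => ι ℂ (a t.castSucc + b t.castSucc)) ?_
      · rw [List.length_ofFn] at this; exact this
      · intro x hx
        simp only [List.mem_ofFn] at hx
        obtain ⟨t, rfl⟩ := hx
        show (Complex.I • ι ℂ (bL - aL)) * _ = -(_ * (Complex.I • ι ℂ (bL - aL)))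
        rw [smul_mul_assoc, mul_smul_comm, ι_anticomm, smul_neg]
    have hprod : (E * e) * (C * c) = ((-1 : ℂ) ^ m * (-2 * Complex.I)) •
        ((E * C) * (ι ℂ aL * ι ℂ bL)) := by
      calc (E * e) * (C * c) = E * (e * C) * c := by
            rw [mul_assoc E e (C * c), ← mul_assoc e C c, ← mul_assoc]
        _ = (-1 : ℂ) ^ m • (E * C * (e * c)) := by
            rw [heC, mul_smul_comm, smul_mul_assoc]
            rw [mul_assoc E (C * e) c, mul_assoc C e c, ← mul_assoc]
        _ = _ := by rw [hec, mul_smul_comm, smul_smul, mul_smul]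
    rw [hprod, smul_smul, ← ih, smul_mul_assoc, mul_smul_comm, smul_smul]
    congr 1
    have hq : (m + 1) * (m + 1 + 1) / 2 = m * (m + 1) / 2 + (m + 1) := by
      have h2 : (m + 1) * (m + 1 + 1) = m * (m + 1) + (m + 1) * 2 := by ring
      rw [h2, Nat.add_mul_div_right _ _ (by norm_num)]
    have h1 : ((-1 : ℂ)) ^ (m * 2) = 1 := by
      rw [mul_comm m 2, pow_mul, neg_one_sq, one_pow]
    rw [hq, pow_add, pow_succ]
    ring_nf
    rw [h1]
    ring

/-- In the exterior algebra of a `ℂ`-module, with `c_t = ι(a_t + b_t)` and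
`e_t = i • ι(b_t − a_t)`, one has
`(−1)^{m(m+1)/2} · 2^{−m} · (e_1 ⋯ e_m) * (c_1 ⋯ c_m) = ∏_t (i • (ι a_t * ι b_t))`. -/
theorem stmt3 {M : Type*} [AddCommGroup M] [Module ℂ M] {m : ℕ} (hm : 1 ≤ m)
    (a b : Fin m → M) :
    ((-1 : ℂ) ^ (m * (m + 1) / 2) * (2 : ℂ)⁻¹ ^ m) •
        ((List.ofFn fun t : Fin m => Complex.I • ι ℂ (b t - a t)).prod *
          (List.ofFn fun t : Fin m => ι ℂ (a t + b t)).prod) =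
      (List.ofFn fun t : Fin m => Complex.I • (ι ℂ (a t) * ι ℂ (b t))).prod :=
  key m a b
end

section
/- Let M be a module over a commutative ring R, let ι : M → ExteriorAlgebra R M be the canonical embedding, let ℓ ≥ 1, and let c_1, …, c_ℓ ∈ M. Define δ = ∏_{s=1}^{ℓ−1} ι(c_s − c_{s+1}) (product taken in increasing order of s; δ = 1 if ℓ = 1). Then for every t with 1 ≤ t ≤ ℓ, one has ι(c_t) * δ = (−1)^{ℓ−1} · ι(c_1) * ι(c_2) * ⋯ * ι(c_ℓ). (This is identity (2) of Lemma 2, with c_t playing the role of d^c u_{j_t}.) -/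
open ExteriorAlgebra

private lemma iota_mul_prod_eq_zero {R M : Type*} [CommRing R] [AddCommGroup M] [Module R M]
    (L : List M) (x : M) (hx : x ∈ L) :
    ι R x * (L.map (ι R)).prod = 0 := by
  induction L with
  | nil => simp at hx
  | cons m L ih =>
    rcases List.mem_cons.mp hx with h | h
    · subst h
      simp [← mul_assoc, ExteriorAlgebra.ι_sq_zero]
    · have hswap : ι R x * ι R m = - (ι R m * ι R x) :=
        eq_neg_of_add_eq_zero_left (ExteriorAlgebra.ι_add_mul_swap x m)
      rw [List.map_cons, List.prod_cons, ← mul_assoc, hswap, neg_mul, mul_assoc, ih h,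
        mul_zero, neg_zero]

/-- Identity (2) of Lemma 2: with `δ = ∏_{s=1}^{ℓ−1} ι(c_s − c_{s+1})` (here `ℓ = l + 1`),
for every `t` one has `ι(c_t) * δ = (−1)^{ℓ−1} · ι(c_1) * ⋯ * ι(c_ℓ)`. -/
theorem stmt4 {R M : Type*} [CommRing R] [AddCommGroup M] [Module R M] {l : ℕ}
    (c : Fin (l + 1) → M) (t : Fin (l + 1)) :
    ι R (c t) * (List.ofFn fun s : Fin l => ι R (c s.castSucc - c s.succ)).prod =
      ((-1 : R) ^ l) • (List.ofFn fun s : Fin (l + 1) => ι R (c s)).prod := by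
  induction l with
  | zero =>
    fin_cases t
    simp
  | succ l ih =>
    induction t using Fin.induction with
    | zero =>
      have h1 := ih (fun i : Fin (l + 1) => c i.succ) 0
      simp only [Fin.succ_zero_eq_one, Fin.succ_castSucc] at h1
      rw [List.ofFn_succ, List.ofFn_succ (f := fun s : Fin (l + 2) => ι R (c s)),
        List.prod_cons, List.prod_cons]
      simp only [Fin.castSucc_zero, Fin.succ_zero_eq_one, Fin.succ_castSucc]
      have hsq : ι R (c 0) * ι R (c 0 - c 1) = - (ι R (c 0) * ι R (c 1)) := by
        rw [map_sub, mul_sub, ExteriorAlgebra.ι_sq_zero, zero_sub]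
      rw [← mul_assoc, hsq, neg_mul, mul_assoc, h1, mul_smul_comm, pow_succ,
        mul_comm ((-1 : R) ^ l), mul_smul, neg_one_smul]
    | succ t iht =>
      have hzero : ι R (c t.castSucc - c t.succ) *
          (List.ofFn fun s : Fin (l + 1) => ι R (c s.castSucc - c s.succ)).prod = 0 := by
        have := iota_mul_prod_eq_zero (R := R)
          (List.ofFn fun s : Fin (l + 1) => c s.castSucc - c s.succ)
          (c t.castSucc - c t.succ) (by rw [List.mem_ofFn]; exact ⟨t, rfl⟩)
        rwa [List.map_ofFn] at this
      have key : ι R (c t.succ) = ι R (c t.castSucc) - ι R (c t.castSucc - c t.succ) := by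
        rw [map_sub]; abel
      rw [key, sub_mul, hzero, sub_zero, iht]
end

section
/- Let M be a module over a commutative ring R, let ι : M → ExteriorAlgebra R M be the canonical embedding, let ℓ ≥ 1, and let c_1, …, c_ℓ ∈ M. Then ∑_{t=1}^{ℓ} (−1)^{ℓ−t} · (ι(c_1) * ⋯ * ι(c_{t−1}) * ι(c_{t+1}) * ⋯ * ι(c_ℓ)) = ∏_{s=1}^{ℓ−1} ι(c_s − c_{s+1}), where each product of the ι(c_s) is taken in increasing order of the index s, the t-th summand omits the factor ι(c_t), and the right-hand product is 1 when ℓ = 1. (This is identity (3) of Lemma 2.) -/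
open ExteriorAlgebra

lemma prod_ofFn_ι_eq_zero {R M : Type*} [CommRing R] [AddCommGroup M] [Module R M] {n : ℕ}
    (d : Fin n → M) (i j : Fin n) (h : d i = d j) (hij : i ≠ j) :
    (List.ofFn fun s => ι R (d s)).prod = 0 := by
  rw [← ExteriorAlgebra.ιMulti_apply]
  exact AlternatingMap.map_eq_zero_of_eq _ _ h hij

/-- Identity (3) of Lemma 2: with `ℓ = l + 1`,
`∑_{t=1}^{ℓ} (−1)^{ℓ−t} ι(c_1) ⋯ ι(c_{t−1}) * ι(c_{t+1}) ⋯ ι(c_ℓ) = ∏_{s=1}^{ℓ−1} ι(c_s − c_{s+1})`,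
where the `t`-th summand omits the factor `ι(c_t)`. -/
theorem stmt5 {R M : Type*} [CommRing R] [AddCommGroup M] [Module R M] {l : ℕ}
    (c : Fin (l + 1) → M) :
    (∑ t : Fin (l + 1), ((-1 : R) ^ (l - t.val)) •
        (List.ofFn fun s : Fin l => ι R (c (t.succAbove s))).prod) =
      (List.ofFn fun s : Fin l => ι R (c s.castSucc - c s.succ)).prod := by
  induction l with
  | zero => simp
  | succ l ih =>
    rw [List.ofFn_succ', List.prod_concat]
    have hr : (List.ofFn fun s : Fin l =>
        ι R (c (Fin.castSucc s).castSucc - c (Fin.castSucc s).succ)).prod =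
        (List.ofFn fun s : Fin l =>
          ι R ((c ∘ Fin.castSucc) s.castSucc - (c ∘ Fin.castSucc) s.succ)).prod := by
      simp [Fin.succ_castSucc, Function.comp, -Fin.castSucc_succ]
    rw [hr, ← ih (c ∘ Fin.castSucc)]
    rw [Fin.sum_univ_castSucc, map_sub, Finset.sum_mul]
    simp only [smul_mul_assoc, mul_sub, smul_sub, Finset.sum_sub_distrib]
    have key1 : (∑ i : Fin (l + 1), (-1 : R) ^ (l - i.val) •
        ((List.ofFn fun s : Fin l => ι R ((c ∘ Fin.castSucc) (i.succAbove s))).prod *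
          ι R (c (Fin.last l).castSucc))) =
        (-1 : R) ^ (l + 1 - (Fin.last (l + 1)).val) •
          (List.ofFn fun s : Fin (l + 1) => ι R (c ((Fin.last (l + 1)).succAbove s))).prod := by
      rw [Finset.sum_eq_single (Fin.last l)]
      · conv_rhs => rw [List.ofFn_succ', List.prod_concat]
        simp [Fin.succAbove_last, Function.comp]
      · intro i _ hi
        have hz : (List.ofFn fun s : Fin l => ι R ((c ∘ Fin.castSucc) (i.succAbove s))).prod *
            ι R (c (Fin.last l).castSucc) = 0 := by
          obtain ⟨s0, hs0⟩ := Fin.exists_succAbove_eq (Ne.symm hi)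
          have hzero := prod_ofFn_ι_eq_zero (R := R)
            (Fin.snoc (fun s : Fin l => c ((i.succAbove s).castSucc))
              (c (Fin.last l).castSucc))
            s0.castSucc (Fin.last l) (by simp [hs0]) (Fin.ne_of_lt (Fin.castSucc_lt_last s0))
          rw [List.ofFn_succ'] at hzero
          simpa [List.prod_concat, Fin.snoc_castSucc, Fin.snoc_last, Function.comp] using hzero
        rw [hz, smul_zero]
      · simp
    have key2 : ∀ i : Fin (l + 1),
        (-1 : R) ^ (l + 1 - (i.castSucc : Fin (l + 2)).val) •
          (List.ofFn fun s : Fin (l + 1) => ι R (c (i.castSucc.succAbove s))).prod =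
        -((-1 : R) ^ (l - i.val) •
          ((List.ofFn fun s : Fin l => ι R ((c ∘ Fin.castSucc) (i.succAbove s))).prod *
            ι R (c (Fin.last l).succ))) := by
      intro i
      have hlist : (List.ofFn fun s : Fin (l + 1) => ι R (c (i.castSucc.succAbove s))).prod =
          (List.ofFn fun s : Fin l => ι R ((c ∘ Fin.castSucc) (i.succAbove s))).prod *
            ι R (c (Fin.last l).succ) := by
        rw [List.ofFn_succ', List.prod_concat,
          Fin.succAbove_of_le_castSucc _ _ (by
            simpa using Fin.castSucc_le_castSucc_iff.mpr (Fin.le_last i))]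
        simp only [Fin.castSucc_succAbove_castSucc]
        rfl
      rw [hlist, Fin.coe_castSucc, Nat.succ_sub (Fin.is_le i), pow_succ]
      simp [smul_smul, mul_comm]
    simp only [key2]
    rw [Finset.sum_neg_distrib, key1]
    abel
end
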